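/- Let V : ℝ² → ℝ² be a C¹ unit divergence-free vector field and let L : I → ℝ² be an integral curve of V⊥ = (w, -v) with L(0) = z. Then L(r) = z + r·V⊥(z) for all r in I; in particular, every integral curve of V⊥ is a straight line traversed at unit speed. -/

import Mathlib

/-- At every point `p`, the derivative of a C¹ unit divergence-free planar
vector field `V = (v,w)` in the perpendicular direction `(w,-v)` vanishes. -/
theorem keyLemma_stmt1 (V : ℝ × ℝ → ℝ × ℝ) (hV : ContDiff ℝ 1 V)
    (hunit : ∀ p, (V p).1 ^ 2 + (V p).2 ^ 2 = 1)
    (hdiv : ∀ p, (fderiv ℝ V p (1, 0)).1 + (fderiv ℝ V p (0, 1)).2 = 0)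
    (p : ℝ × ℝ) : fderiv ℝ V p ((V p).2, -(V p).1) = 0 := by
  have hD : HasFDerivAt V (fderiv ℝ V p) p :=
    (hV.differentiable one_ne_zero p).hasFDerivAt
  set D := fderiv ℝ V p with hDdef
  have h1 : HasFDerivAt (fun q => (V q).1)
      ((ContinuousLinearMap.fst ℝ ℝ ℝ).comp D) p :=
    (ContinuousLinearMap.fst ℝ ℝ ℝ).hasFDerivAt.comp p hD
  have h2 : HasFDerivAt (fun q => (V q).2)
      ((ContinuousLinearMap.snd ℝ ℝ ℝ).comp D) p :=
    (ContinuousLinearMap.snd ℝ ℝ ℝ).hasFDerivAt.comp p hD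
  have hsq : HasFDerivAt (fun q => (V q).1 ^ 2 + (V q).2 ^ 2)
      (((V p).1 • ((ContinuousLinearMap.fst ℝ ℝ ℝ).comp D)
        + (V p).1 • ((ContinuousLinearMap.fst ℝ ℝ ℝ).comp D))
       + ((V p).2 • ((ContinuousLinearMap.snd ℝ ℝ ℝ).comp D)
        + (V p).2 • ((ContinuousLinearMap.snd ℝ ℝ ℝ).comp D))) p := by
    simp only [pow_two]; exact (h1.mul h1).add (h2.mul h2)
  have hconst : HasFDerivAt (fun q => (V q).1 ^ 2 + (V q).2 ^ 2)
      (0 : (ℝ × ℝ) →L[ℝ] ℝ) p := by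
    have : (fun q => (V q).1 ^ 2 + (V q).2 ^ 2) = fun _ => (1:ℝ) :=
      funext hunit
    rw [this]; exact hasFDerivAt_const 1 p
  have hE := hsq.unique hconst
  have e1 : (V p).1 * (D (1,0)).1 + (V p).2 * (D (1,0)).2 = 0 := by
    have := congrArg (fun E => E ((1:ℝ),(0:ℝ))) hE
    simp at this
    linarith [this]
  have e2 : (V p).1 * (D (0,1)).1 + (V p).2 * (D (0,1)).2 = 0 := by
    have := congrArg (fun E => E ((0:ℝ),(1:ℝ))) hE
    simp at this
    linarith [this]
  have e3 : (D (1,0)).1 + (D (0,1)).2 = 0 := hdiv p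
  have hdir : (((V p).2, -(V p).1) : ℝ × ℝ)
      = (V p).2 • ((1:ℝ),(0:ℝ)) + (-(V p).1) • ((0:ℝ),(1:ℝ)) := by
    simp [Prod.ext_iff]
  rw [hdir, map_add, map_smul, map_smul]
  apply Prod.ext
  · simp only [Prod.fst_add, Prod.smul_fst, smul_eq_mul, Prod.fst_zero]
    linear_combination (V p).2 * e3 - e2
  · simp only [Prod.snd_add, Prod.smul_snd, smul_eq_mul, Prod.snd_zero]
    linear_combination e1 - (V p).1 * e3

/-- Integral curves of the perpendicular field V⊥ = (w,-v) of a C¹ unit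
divergence-free planar vector field V = (v,w) are straight lines traversed at
unit speed: if L'(r) = V⊥(L(r)) on an interval I ∋ 0 and L(0) = z, then
L(r) = z + r • V⊥(z) for all r ∈ I. -/
theorem stmt_1 (V : ℝ × ℝ → ℝ × ℝ) (hV : ContDiff ℝ 1 V)
    (hunit : ∀ p, (V p).1 ^ 2 + (V p).2 ^ 2 = 1)
    (hdiv : ∀ p, (fderiv ℝ V p (1, 0)).1 + (fderiv ℝ V p (0, 1)).2 = 0)
    (I : Set ℝ) (hI : Convex ℝ I) (h0I : (0 : ℝ) ∈ I)
    (L : ℝ → ℝ × ℝ) (z : ℝ × ℝ) (hL0 : L 0 = z)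
    (hL : ∀ r ∈ I, HasDerivAt L ((V (L r)).2, -(V (L r)).1) r) :
    ∀ r ∈ I, L r = z + r • ((V z).2, -(V z).1) := by
  -- V ∘ L has zero derivative on I
  have hVL : ∀ r ∈ I, HasDerivWithinAt (fun s => V (L s)) 0 I r := by
    intro r hr
    have hD : HasFDerivAt V (fderiv ℝ V (L r)) (L r) :=
      (hV.differentiable one_ne_zero (L r)).hasFDerivAt
    have := hD.comp_hasDerivAt r (hL r hr)
    rw [keyLemma_stmt1 V hV hunit hdiv (L r)] at this
    exact this.hasDerivWithinAt
  -- hence V ∘ L is constant on I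
  have hVconst : ∀ r ∈ I, V (L r) = V z := by
    intro r hr
    have := hI.norm_image_sub_le_of_norm_hasDerivWithin_le (C := 0) hVL
      (fun x _ => by simp) h0I hr
    simp only [mul_comm, zero_mul, norm_le_zero_iff, sub_eq_zero] at this
    rw [this, hL0]
  -- L has constant derivative c, so L r - r • c is constant on I
  set c : ℝ × ℝ := ((V z).2, -(V z).1) with hc
  have hg : ∀ r ∈ I, HasDerivWithinAt (fun s => L s - s • c) 0 I r := by
    intro r hr
    have h1 : HasDerivAt L c r := by
      have := hL r hr
      rwa [hVconst r hr] at this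
    have h2 : HasDerivAt (fun s : ℝ => s • c) c r := by
      simpa using (hasDerivAt_id r).smul_const c
    have := (h1.sub h2).hasDerivWithinAt (s := I); rw [sub_self] at this; exact this
  intro r hr
  have := hI.norm_image_sub_le_of_norm_hasDerivWithin_le (C := 0) hg
    (fun x _ => by simp) h0I hr
  simp only [zero_mul, norm_le_zero_iff, sub_eq_zero] at this
  have h0 : L 0 - (0:ℝ) • c = z := by simp [hL0]
  rw [h0] at this
  exact sub_eq_iff_eq_add.mp this
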